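/- Let γ ∈ [-3,1] and let f be a classical solution of the Landau equation on an open set D ⊆ ℝ × ℝ³ × ℝ³. Fix t₀ ∈ ℝ, x₀ ∈ ℝ³, v₀ ∈ ℝ³, and r > 0. Then the Galilean-shifted rescaling f_r(t,x,v) = r^{5+γ} f(t₀ + r² t, x₀ + r³ x + r² t v₀, v₀ + r v) is a classical solution of the Landau equation on the set {(t,x,v) : (t₀ + r² t, x₀ + r³ x + r² t v₀, v₀ + r v) ∈ D}. -/

import Mathlib

open MeasureTheory Real
open scoped ENNReal NNReal

noncomputable section

/-- Velocity/position space `ℝ³` with the Euclidean structure. -/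
abbrev E3 : Type := EuclideanSpace ℝ (Fin 3)

/-- Partial derivative of `g : E3 → ℝ` in the `i`-th coordinate direction. -/
def pd (g : E3 → ℝ) (i : Fin 3) (v : E3) : ℝ :=
  fderiv ℝ g v (EuclideanSpace.single i 1)

/-- Divergence of a vector field on `E3`. -/
def divV (F : E3 → Fin 3 → ℝ) (v : E3) : ℝ :=
  ∑ i, pd (fun u => F u i) i v

/-- Entries of the projection matrix `Π(w) = I - w ⊗ w / |w|²`. -/
def projMat (w : E3) (i j : Fin 3) : ℝ :=
  (if i = j then (1 : ℝ) else 0) - w i * w j / ‖w‖ ^ 2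

/-- Landau diffusion matrix `ā^f(v)`, entry `(i,j)`. -/
def aBar (γ aγ : ℝ) (g : E3 → ℝ) (v : E3) (i j : Fin 3) : ℝ :=
  aγ * ∫ w : E3, ‖w‖ ^ (γ + 2) * projMat w i j * g (v - w)

/-- Landau drift coefficient `b̄^f(v)`, component `i`. -/
def bBar (γ bγ : ℝ) (g : E3 → ℝ) (v : E3) (i : Fin 3) : ℝ :=
  bγ * ∫ w : E3, ‖w‖ ^ γ * w i * g (v - w)

/-- Landau zeroth-order coefficient `c̄^f(v)` (equal to `f` itself when `γ = -3`). -/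
def cBar (γ cγ : ℝ) (g : E3 → ℝ) (v : E3) : ℝ :=
  if γ = -3 then g v else cγ * ∫ w : E3, ‖w‖ ^ γ * g (v - w)

/-- Transport derivative `∂_t g + v · ∇_x g`. -/
def transportD (g : ℝ → E3 → E3 → ℝ) (t : ℝ) (x v : E3) : ℝ :=
  deriv (fun s => g s x v) t + ∑ i, v i * pd (fun y => g t y v) i x

/-- Right-hand side `∇_v·(ā^g ∇_v g) + b̄^g·∇_v g + c̄^g g` of the Landau equation,
for `g = f(t,x,·)`. -/
def landauRHS (γ aγ bγ cγ : ℝ) (g : E3 → ℝ) (v : E3) : ℝ :=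
  divV (fun u i => ∑ j, aBar γ aγ g u i j * pd g j u) v
    + (∑ i, bBar γ bγ g v i * pd g i v) + cBar γ cγ g v * g v

/-- `f` is a classical solution of the Landau equation on `D ⊆ ℝ_t × ℝ³_x × ℝ³_v`:
nonnegative, C¹ in `(t,x)`, C² in `v`, satisfying the equation pointwise on `D`. -/
structure IsLandauSolution (γ aγ bγ cγ : ℝ) (D : Set (ℝ × E3 × E3))
    (f : ℝ → E3 → E3 → ℝ) : Prop where
  nonneg : ∀ t x v, (t, x, v) ∈ D → 0 ≤ f t x v
  c1_tx : ∀ t x v, (t, x, v) ∈ D → ContDiffAt ℝ 1 (fun p : ℝ × E3 => f p.1 p.2 v) (t, x)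
  c2_v : ∀ t x v, (t, x, v) ∈ D → ContDiffAt ℝ 2 (fun u => f t x u) v
  eqn : ∀ t x v, (t, x, v) ∈ D →
    transportD f t x v = landauRHS γ aγ bγ cγ (f t x) v

/-- The kinetic cylinder `Q_r(t₀,x₀,v₀)`. -/
def Qcyl (r t₀ : ℝ) (x₀ v₀ : E3) : Set (ℝ × E3 × E3) :=
  {z | t₀ - r ^ 2 < z.1 ∧ z.1 ≤ t₀ ∧
    ‖z.2.1 - x₀ - (z.1 - t₀) • v₀‖ < r ^ 3 ∧ ‖z.2.2 - v₀‖ < r}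


/-! ### Auxiliary lemmas for the scaling proof -/

section ScalingAux

lemma pd_affine (g : E3 → ℝ) (K c : ℝ) (hK : K ≠ 0) (hc : c ≠ 0) (b : E3) (j : Fin 3) (u : E3) :
    pd (fun w => K * g (b + c • w)) j u = K * c * pd g j (b + c • u) := by
  have key : ∀ w : E3, b + c • (c⁻¹ • (w - b)) = w := fun w => by
    rw [smul_smul, mul_inv_cancel₀ hc, one_smul]; abel
  by_cases hg : DifferentiableAt ℝ g (b + c • u)
  · have hA : HasFDerivAt (fun w : E3 => b + c • w) (c • ContinuousLinearMap.id ℝ E3) u := by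
      simpa using ((hasFDerivAt_id u).const_smul c).const_add b
    have h1 : HasFDerivAt (fun w => K * g (b + c • w))
        (K • ((fderiv ℝ g (b + c • u)).comp (c • ContinuousLinearMap.id ℝ E3))) u :=
      (hg.hasFDerivAt.comp u hA).const_mul K
    rw [pd, h1.fderiv]
    simp [pd, ContinuousLinearMap.smul_apply, ContinuousLinearMap.comp_apply]
    ring
  · have hg' : ¬ DifferentiableAt ℝ (fun w => K * g (b + c • w)) u := by
      intro h
      apply hg
      have hrepr : g = fun w => K⁻¹ * ((fun z => K * g (b + c • z)) (c⁻¹ • (w - b))) := by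
        funext w
        simp only [key w]
        field_simp
      rw [hrepr]
      have hdiff : DifferentiableAt ℝ (fun w : E3 => c⁻¹ • (w - b)) (b + c • u) :=
        (differentiableAt_id.sub_const b).const_smul c⁻¹
      have hdiff2 := DifferentiableAt.comp (𝕜 := ℝ) (b + c • u)
        (g := fun z : E3 => K * g (b + c • z)) (f := fun w : E3 => c⁻¹ • (w - b))
        (by simpa [smul_smul, inv_mul_cancel₀ hc] using h) hdiff
      simpa [Function.comp] using hdiff2.const_mul K⁻¹
    rw [pd, pd, fderiv_zero_of_not_differentiableAt hg, fderiv_zero_of_not_differentiableAt hg']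
    simp

lemma projMat_smul (r : ℝ) (hr : r ≠ 0) (w : E3) (i j : Fin 3) :
    projMat (r • w) i j = projMat w i j := by
  unfold projMat
  rcases eq_or_ne w 0 with rfl | hw
  · simp
  · have hn : ‖w‖ ≠ 0 := norm_ne_zero_iff.mpr hw
    have h2 : ‖r • w‖ ^ 2 = r ^ 2 * ‖w‖ ^ 2 := by
      rw [norm_smul, mul_pow, Real.norm_eq_abs, sq_abs]
    rw [h2]
    have : (r • w) i * (r • w) j = r ^ 2 * (w i * w j) := by
      simp [PiLp.smul_apply, smul_eq_mul]; ring
    rw [this]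
    congr 1
    rw [mul_div_mul_left _ _ (by positivity)]

lemma norm_smul_rpow (r : ℝ) (hr : 0 < r) (w : E3) (e : ℝ) :
    ‖r • w‖ ^ e = r ^ e * ‖w‖ ^ e := by
  rw [norm_smul, Real.norm_eq_abs, abs_of_pos hr, Real.mul_rpow hr.le (norm_nonneg w)]

lemma integral_scale (φ : E3 → ℝ) (c : ℝ) (hc : 0 ≤ c) :
    ∫ w : E3, φ (c • w) = (c ^ 3)⁻¹ * ∫ w, φ w := by
  rw [MeasureTheory.Measure.integral_comp_smul volume φ c, finrank_euclideanSpace_fin,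
    abs_of_nonneg (by positivity), smul_eq_mul]

lemma rpow_npow3 (r : ℝ) : r ^ ((3:ℕ):ℝ) = r ^ (3:ℕ) := Real.rpow_natCast r 3

lemma aBar_scale (γ aγ : ℝ) (g : E3 → ℝ) (r : ℝ) (hr : 0 < r) (v₀ v : E3) (i j : Fin 3) :
    aBar γ aγ (fun u => r ^ ((5:ℝ)+γ) * g (v₀ + r • u)) v i j
      = aBar γ aγ g (v₀ + r • v) i j := by
  unfold aBar
  congr 1
  set K := r ^ ((5:ℝ)+γ) with hK
  set V := v₀ + r • v with hV
  set ψ : E3 → ℝ := fun u => ‖u‖ ^ (γ+2) * projMat u i j * g (V - u) with hψ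
  have hpt : (fun w : E3 => ‖w‖ ^ (γ+2) * projMat w i j * (K * g (v₀ + r • (v - w))))
      = fun w => (K * (r ^ (γ+2))⁻¹) * ψ (r • w) := by
    funext w
    have h1 : v₀ + r • (v - w) = V - r • w := by rw [smul_sub, hV]; abel
    have hrp : r ^ (γ+2) ≠ 0 := (Real.rpow_pos_of_pos hr _).ne'
    simp only [hψ, norm_smul_rpow r hr, projMat_smul r hr.ne', h1]
    field_simp
  rw [hpt, MeasureTheory.integral_const_mul, integral_scale ψ r hr.le]
  have hcoef : K * (r ^ (γ+2))⁻¹ * (r ^ 3)⁻¹ = 1 := by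
    rw [← rpow_npow3, ← Real.rpow_neg hr.le, ← Real.rpow_neg hr.le, hK,
      ← Real.rpow_add hr, ← Real.rpow_add hr,
      show (5:ℝ) + γ + -(γ + 2) + -((3:ℕ):ℝ) = 0 by push_cast; ring, Real.rpow_zero]
  rw [← mul_assoc, hcoef, one_mul]

lemma bBar_scale (γ bγ : ℝ) (g : E3 → ℝ) (r : ℝ) (hr : 0 < r) (v₀ v : E3) (i : Fin 3) :
    bBar γ bγ (fun u => r ^ ((5:ℝ)+γ) * g (v₀ + r • u)) v i
      = r * bBar γ bγ g (v₀ + r • v) i := by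
  unfold bBar
  rw [mul_left_comm]
  congr 1
  set K := r ^ ((5:ℝ)+γ) with hK
  set V := v₀ + r • v with hV
  set ψ : E3 → ℝ := fun u => ‖u‖ ^ γ * u i * g (V - u) with hψ
  have hpt : (fun w : E3 => ‖w‖ ^ γ * w i * (K * g (v₀ + r • (v - w))))
      = fun w => (K * (r ^ γ)⁻¹ * r⁻¹) * ψ (r • w) := by
    funext w
    have h1 : v₀ + r • (v - w) = V - r • w := by rw [smul_sub, hV]; abel
    have hrp : r ^ γ ≠ 0 := (Real.rpow_pos_of_pos hr _).ne'
    have h2 : (r • w) i = r * w i := rfl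
    simp only [hψ, norm_smul_rpow r hr, h1, h2]
    field_simp
  rw [hpt, MeasureTheory.integral_const_mul, integral_scale ψ r hr.le]
  have hcoef : K * (r ^ γ)⁻¹ * r⁻¹ * (r ^ 3)⁻¹ = r := by
    rw [← rpow_npow3, show r⁻¹ = (r ^ (1:ℝ))⁻¹ by rw [Real.rpow_one],
      ← Real.rpow_neg hr.le, ← Real.rpow_neg hr.le, ← Real.rpow_neg hr.le, hK,
      ← Real.rpow_add hr, ← Real.rpow_add hr, ← Real.rpow_add hr,
      show (5:ℝ) + γ + -γ + -(1:ℝ) + -((3:ℕ):ℝ) = 1 by push_cast; ring, Real.rpow_one]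
  rw [← mul_assoc, hcoef]

lemma cBar_scale (γ cγ : ℝ) (g : E3 → ℝ) (r : ℝ) (hr : 0 < r) (v₀ v : E3) :
    cBar γ cγ (fun u => r ^ ((5:ℝ)+γ) * g (v₀ + r • u)) v
      = r ^ 2 * cBar γ cγ g (v₀ + r • v) := by
  unfold cBar
  by_cases hγ : γ = -3
  · subst hγ
    rw [if_pos rfl, if_pos rfl]
    show r ^ ((5:ℝ) + (-3:ℝ)) * g (v₀ + r • v) = _
    rw [show (5:ℝ) + (-3:ℝ) = ((2:ℕ):ℝ) by norm_num, Real.rpow_natCast]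
  · simp only [if_neg hγ]
    rw [mul_left_comm]
    congr 1
    set K := r ^ ((5:ℝ)+γ) with hK
    set V := v₀ + r • v with hV
    set ψ : E3 → ℝ := fun u => ‖u‖ ^ γ * g (V - u) with hψ
    have hpt : (fun w : E3 => ‖w‖ ^ γ * (K * g (v₀ + r • (v - w))))
        = fun w => (K * (r ^ γ)⁻¹) * ψ (r • w) := by
      funext w
      have h1 : v₀ + r • (v - w) = V - r • w := by rw [smul_sub, hV]; abel
      have hrp : r ^ γ ≠ 0 := (Real.rpow_pos_of_pos hr _).ne'
      simp only [hψ, norm_smul_rpow r hr, h1]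
      field_simp
    rw [hpt, MeasureTheory.integral_const_mul, integral_scale ψ r hr.le]
    have hcoef : K * (r ^ γ)⁻¹ * (r ^ 3)⁻¹ = r ^ 2 := by
      rw [← rpow_npow3, show r ^ (2:ℕ) = r ^ ((2:ℕ):ℝ) by rw [Real.rpow_natCast],
        ← Real.rpow_neg hr.le, ← Real.rpow_neg hr.le, hK,
        ← Real.rpow_add hr, ← Real.rpow_add hr,
        show (5:ℝ) + γ + -γ + -((3:ℕ):ℝ) = ((2:ℕ):ℝ) by push_cast; ring]
    rw [← mul_assoc, hcoef]

lemma euclid_decomp (u : E3) : ∑ i, u i • EuclideanSpace.single i (1:ℝ) = u := by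
  have := (EuclideanSpace.basisFun (Fin 3) ℝ).sum_repr u
  simpa [EuclideanSpace.basisFun_repr, EuclideanSpace.basisFun_apply] using this

end ScalingAux

/-- Galilean-shifted scaling invariance of the Landau equation.
If `f` is a classical solution on an open set `D`, then
`f_r(t,x,v) = r^{5+γ} f(t₀ + r²t, x₀ + r³x + r²t v₀, v₀ + rv)` is a classical solution
on the pulled-back domain. -/
theorem landau_shifted_scaling_invariance
    (γ aγ bγ cγ : ℝ)
    (hγ : γ ∈ Set.Icc (-3 : ℝ) 1) (haγ : 0 < aγ) (hbγ : 0 < bγ) (hcγ : 0 < cγ)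
    (D : Set (ℝ × E3 × E3)) (hD : IsOpen D)
    (f : ℝ → E3 → E3 → ℝ) (hf : IsLandauSolution γ aγ bγ cγ D f)
    (t₀ : ℝ) (x₀ v₀ : E3) (r : ℝ) (hr : 0 < r) :
    IsLandauSolution γ aγ bγ cγ
      {z : ℝ × E3 × E3 |
        (t₀ + r ^ 2 * z.1, x₀ + r ^ 3 • z.2.1 + (r ^ 2 * z.1) • v₀, v₀ + r • z.2.2) ∈ D}
      (fun t x v =>
        r ^ ((5 : ℝ) + γ) * f (t₀ + r ^ 2 * t) (x₀ + r ^ 3 • x + (r ^ 2 * t) • v₀)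
          (v₀ + r • v)) := by
  have hK0 : (0:ℝ) < r ^ ((5:ℝ) + γ) := Real.rpow_pos_of_pos hr _
  constructor
  · intro t x v hz
    exact mul_nonneg hK0.le (hf.nonneg _ _ _ hz)
  · intro t x v hz
    have hF : ContDiffAt ℝ 1 (fun p : ℝ × E3 => f p.1 p.2 (v₀ + r • v))
        (t₀ + r ^ 2 * t, x₀ + r ^ 3 • x + (r ^ 2 * t) • v₀) := hf.c1_tx _ _ _ hz
    have hL : ContDiff ℝ 1 (fun p : ℝ × E3 =>
        ((t₀ + r ^ 2 * p.1, x₀ + r ^ 3 • p.2 + (r ^ 2 * p.1) • v₀) : ℝ × E3)) := by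
      apply ContDiff.prodMk
      · exact contDiff_const.add (contDiff_const.mul contDiff_fst)
      · exact (contDiff_const.add (contDiff_snd.const_smul (r ^ 3))).add
          ((contDiff_const.mul contDiff_fst).smul contDiff_const)
    have hc := ContDiffAt.comp (t, x) hF hL.contDiffAt
    exact ContDiffAt.mul contDiffAt_const hc
  · intro t x v hz
    have hg : ContDiffAt ℝ 2
        (fun u => f (t₀ + r ^ 2 * t) (x₀ + r ^ 3 • x + (r ^ 2 * t) • v₀) u) (v₀ + r • v) :=
      hf.c2_v _ _ _ hz
    have hA : ContDiff ℝ 2 (fun u : E3 => v₀ + r • u) :=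
      contDiff_const.add (contDiff_id.const_smul r)
    have hc := ContDiffAt.comp v hg hA.contDiffAt
    exact ContDiffAt.mul contDiffAt_const hc
  · intro t x v hz
    simp only [Set.mem_setOf_eq] at hz
    -- notation (as plain terms)
    have hF : DifferentiableAt ℝ (fun p : ℝ × E3 => f p.1 p.2 (v₀ + r • v))
        (t₀ + r ^ 2 * t, x₀ + r ^ 3 • x + (r ^ 2 * t) • v₀) :=
      (hf.c1_tx _ _ _ hz).differentiableAt one_ne_zero
    -- LHS computation
    have hLHS : transportD
        (fun t x v => r ^ ((5:ℝ) + γ) * f (t₀ + r ^ 2 * t) (x₀ + r ^ 3 • x + (r ^ 2 * t) • v₀)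
          (v₀ + r • v)) t x v
        = r ^ ((5:ℝ) + γ) * r ^ 2 *
          transportD f (t₀ + r ^ 2 * t) (x₀ + r ^ 3 • x + (r ^ 2 * t) • v₀) (v₀ + r • v) := by
      have hd1 : deriv (fun s => r ^ ((5:ℝ) + γ) *
            f (t₀ + r ^ 2 * s) (x₀ + r ^ 3 • x + (r ^ 2 * s) • v₀) (v₀ + r • v)) t
          = r ^ ((5:ℝ) + γ) * fderiv ℝ (fun p : ℝ × E3 => f p.1 p.2 (v₀ + r • v))
              (t₀ + r ^ 2 * t, x₀ + r ^ 3 • x + (r ^ 2 * t) • v₀)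
              ((r ^ 2, r ^ 2 • v₀) : ℝ × E3) := by
        have hL : HasDerivAt (fun s : ℝ =>
            ((t₀ + r ^ 2 * s, x₀ + r ^ 3 • x + (r ^ 2 * s) • v₀) : ℝ × E3))
            ((r ^ 2, r ^ 2 • v₀) : ℝ × E3) t := by
          apply HasDerivAt.prodMk
          · simpa using ((hasDerivAt_id t).const_mul (r ^ 2)).const_add t₀
          · have h : HasDerivAt (fun s : ℝ => s • (r ^ 2 • v₀)) ((1:ℝ) • r ^ 2 • v₀) t :=
              (hasDerivAt_id t).smul_const (r ^ 2 • v₀)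
            have h2 : (fun s : ℝ => x₀ + r ^ 3 • x + (r ^ 2 * s) • v₀)
                = fun s => (x₀ + r ^ 3 • x) + s • (r ^ 2 • v₀) := by
              funext s; rw [smul_smul]; ring_nf
            rw [h2]
            simpa using h.const_add (x₀ + r ^ 3 • x)
        have h1 := (hF.hasFDerivAt.comp_hasDerivAt t hL).const_mul (r ^ ((5:ℝ) + γ))
        exact h1.deriv
      have hd2 : ∀ i : Fin 3, pd (fun y => r ^ ((5:ℝ) + γ) *
            f (t₀ + r ^ 2 * t) (x₀ + r ^ 3 • y + (r ^ 2 * t) • v₀) (v₀ + r • v)) i x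
          = r ^ ((5:ℝ) + γ) * (r ^ 3 * fderiv ℝ (fun p : ℝ × E3 => f p.1 p.2 (v₀ + r • v))
              (t₀ + r ^ 2 * t, x₀ + r ^ 3 • x + (r ^ 2 * t) • v₀)
              (((0:ℝ), EuclideanSpace.single i (1:ℝ)) : ℝ × E3)) := by
        intro i
        have hM : HasFDerivAt (fun y : E3 =>
            ((t₀ + r ^ 2 * t, x₀ + r ^ 3 • y + (r ^ 2 * t) • v₀) : ℝ × E3))
            ((0 : E3 →L[ℝ] ℝ).prod (r ^ 3 • ContinuousLinearMap.id ℝ E3)) x := by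
          apply HasFDerivAt.prodMk
          · exact hasFDerivAt_const _ x
          · simpa using (((hasFDerivAt_id x).const_smul (r ^ 3)).const_add x₀).add_const
              ((r ^ 2 * t) • v₀)
        have h1 := (hF.hasFDerivAt.comp x hM).const_mul (r ^ ((5:ℝ) + γ))
        have h2 : HasFDerivAt (fun y : E3 => r ^ ((5:ℝ) + γ) *
            f (t₀ + r ^ 2 * t) (x₀ + r ^ 3 • y + (r ^ 2 * t) • v₀) (v₀ + r • v))
            ((r ^ ((5:ℝ) + γ)) • (fderiv ℝ (fun p : ℝ × E3 => f p.1 p.2 (v₀ + r • v))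
              (t₀ + r ^ 2 * t, x₀ + r ^ 3 • x + (r ^ 2 * t) • v₀)).comp
              ((0 : E3 →L[ℝ] ℝ).prod (r ^ 3 • ContinuousLinearMap.id ℝ E3))) x := by
          simpa [Function.comp] using h1
        rw [pd, h2.fderiv]
        have h3 : ((0 : E3 →L[ℝ] ℝ).prod (r ^ 3 • ContinuousLinearMap.id ℝ E3))
            (EuclideanSpace.single i 1)
            = ((0:ℝ), r ^ 3 • EuclideanSpace.single i (1:ℝ)) := by simp
        have h4 : (((0:ℝ), r ^ 3 • EuclideanSpace.single i (1:ℝ)) : ℝ × E3)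
            = r ^ 3 • (((0:ℝ), EuclideanSpace.single i (1:ℝ)) : ℝ × E3) := by
          simp [Prod.smul_mk]
        simp only [ContinuousLinearMap.smul_apply, ContinuousLinearMap.comp_apply, h3, h4,
          ContinuousLinearMap.map_smul, smul_eq_mul]
      have hd3 : deriv (fun s => f s (x₀ + r ^ 3 • x + (r ^ 2 * t) • v₀) (v₀ + r • v))
            (t₀ + r ^ 2 * t)
          = fderiv ℝ (fun p : ℝ × E3 => f p.1 p.2 (v₀ + r • v))
              (t₀ + r ^ 2 * t, x₀ + r ^ 3 • x + (r ^ 2 * t) • v₀) (((1:ℝ), (0:E3)) : ℝ × E3) := by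
        have hL : HasDerivAt (fun s : ℝ =>
            ((s, x₀ + r ^ 3 • x + (r ^ 2 * t) • v₀) : ℝ × E3)) (((1:ℝ), (0:E3)) : ℝ × E3)
            (t₀ + r ^ 2 * t) :=
          (hasDerivAt_id _).prodMk (hasDerivAt_const _ _)
        exact (hF.hasFDerivAt.comp_hasDerivAt _ hL).deriv
      have hd4 : ∀ i : Fin 3, pd (fun y => f (t₀ + r ^ 2 * t) y (v₀ + r • v)) i
            (x₀ + r ^ 3 • x + (r ^ 2 * t) • v₀)
          = fderiv ℝ (fun p : ℝ × E3 => f p.1 p.2 (v₀ + r • v))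
              (t₀ + r ^ 2 * t, x₀ + r ^ 3 • x + (r ^ 2 * t) • v₀)
              (((0:ℝ), EuclideanSpace.single i (1:ℝ)) : ℝ × E3) := by
        intro i
        have hM : HasFDerivAt (fun y : E3 => ((t₀ + r ^ 2 * t, y) : ℝ × E3))
            ((0 : E3 →L[ℝ] ℝ).prod (ContinuousLinearMap.id ℝ E3))
            (x₀ + r ^ 3 • x + (r ^ 2 * t) • v₀) :=
          (hasFDerivAt_const _ _).prodMk (hasFDerivAt_id _)
        have h1 : HasFDerivAt (fun y : E3 => f (t₀ + r ^ 2 * t) y (v₀ + r • v))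
            ((fderiv ℝ (fun p : ℝ × E3 => f p.1 p.2 (v₀ + r • v))
              (t₀ + r ^ 2 * t, x₀ + r ^ 3 • x + (r ^ 2 * t) • v₀)).comp
              ((0 : E3 →L[ℝ] ℝ).prod (ContinuousLinearMap.id ℝ E3)))
            (x₀ + r ^ 3 • x + (r ^ 2 * t) • v₀) := by
          exact hF.hasFDerivAt.comp _ hM
        rw [pd, h1.fderiv]
        simp
      simp only [transportD]
      rw [hd1, hd3]
      simp only [hd2, hd4]
      -- linear algebra over the fderiv
      set φ := fderiv ℝ (fun p : ℝ × E3 => f p.1 p.2 (v₀ + r • v))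
          (t₀ + r ^ 2 * t, x₀ + r ^ 3 • x + (r ^ 2 * t) • v₀) with hφ
      have hsv : ((r ^ 2, r ^ 2 • v₀) : ℝ × E3) = (r ^ 2 : ℝ) • (((1:ℝ), v₀) : ℝ × E3) := by
        simp [Prod.smul_mk]
      have hsplitv : (((1:ℝ), v₀) : ℝ × E3)
          = (((1:ℝ), (0:E3)) : ℝ × E3)
            + ∑ i, v₀ i • (((0:ℝ), EuclideanSpace.single i (1:ℝ)) : ℝ × E3) := by
        rw [Prod.ext_iff]
        constructor
        · simp [Prod.fst_sum]
        · simp [Prod.snd_sum, euclid_decomp]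
      have hφ1 : φ ((r ^ 2, r ^ 2 • v₀) : ℝ × E3)
          = r ^ 2 * (φ (((1:ℝ), (0:E3)) : ℝ × E3)
              + ∑ i, v₀ i * φ (((0:ℝ), EuclideanSpace.single i (1:ℝ)) : ℝ × E3)) := by
        rw [hsv, φ.map_smul, hsplitv, φ.map_add, map_sum φ _ _]
        simp only [_root_.map_smul, smul_eq_mul]
      rw [hφ1]
      have hVi : ∀ i : Fin 3, (v₀ + r • v) i = v₀ i + r * v i := fun i => rfl
      simp only [hVi]
      have hS2 : ∑ i, (v₀ i + r * v i) * φ (((0:ℝ), EuclideanSpace.single i (1:ℝ)) : ℝ × E3)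
          = (∑ i, v₀ i * φ (((0:ℝ), EuclideanSpace.single i (1:ℝ)) : ℝ × E3))
            + ∑ i, (r * v i) * φ (((0:ℝ), EuclideanSpace.single i (1:ℝ)) : ℝ × E3) := by
        rw [← Finset.sum_add_distrib]
        exact Finset.sum_congr rfl fun i _ => by ring
      have hS1 : ∑ i, v i * (r ^ ((5:ℝ) + γ) *
            (r ^ 3 * φ (((0:ℝ), EuclideanSpace.single i (1:ℝ)) : ℝ × E3)))
          = (r ^ ((5:ℝ) + γ) * r ^ 2) *
            ∑ i, (r * v i) * φ (((0:ℝ), EuclideanSpace.single i (1:ℝ)) : ℝ × E3) := by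
        rw [Finset.mul_sum]
        exact Finset.sum_congr rfl fun i _ => by ring
      rw [hS1, hS2]
      ring
    -- RHS computation
    have hRHS : landauRHS γ aγ bγ cγ
          (fun u => r ^ ((5:ℝ) + γ) * f (t₀ + r ^ 2 * t) (x₀ + r ^ 3 • x + (r ^ 2 * t) • v₀)
            (v₀ + r • u)) v
        = r ^ ((5:ℝ) + γ) * r ^ 2 *
          landauRHS γ aγ bγ cγ (f (t₀ + r ^ 2 * t) (x₀ + r ^ 3 • x + (r ^ 2 * t) • v₀))
            (v₀ + r • v) := by
      set g : E3 → ℝ := f (t₀ + r ^ 2 * t) (x₀ + r ^ 3 • x + (r ^ 2 * t) • v₀) with hgdef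
      simp only [landauRHS, divV]
      have hfun : ∀ i : Fin 3,
          (fun u => ∑ j, aBar γ aγ (fun u' => r ^ ((5:ℝ) + γ) * g (v₀ + r • u')) u i j *
            pd (fun u' => r ^ ((5:ℝ) + γ) * g (v₀ + r • u')) j u)
          = fun u => (r ^ ((5:ℝ) + γ) * r) *
              ((fun w => ∑ j, aBar γ aγ g w i j * pd g j w) (v₀ + r • u)) := by
        intro i
        funext u
        show _ = (r ^ ((5:ℝ) + γ) * r) * ∑ j, aBar γ aγ g (v₀ + r • u) i j * pd g j (v₀ + r • u)
        rw [Finset.mul_sum]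
        apply Finset.sum_congr rfl
        intro j _
        rw [aBar_scale γ aγ g r hr v₀ u i j, pd_affine g (r ^ ((5:ℝ) + γ)) r hK0.ne' hr.ne' v₀ j u]
        ring
      have hdiv : ∑ i, pd (fun u => ∑ j,
            aBar γ aγ (fun u' => r ^ ((5:ℝ) + γ) * g (v₀ + r • u')) u i j *
            pd (fun u' => r ^ ((5:ℝ) + γ) * g (v₀ + r • u')) j u) i v
          = (r ^ ((5:ℝ) + γ) * r ^ 2) * ∑ i,
            pd (fun w => ∑ j, aBar γ aγ g w i j * pd g j w) i (v₀ + r • v) := by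
        rw [Finset.mul_sum]
        apply Finset.sum_congr rfl
        intro i _
        rw [hfun i, pd_affine (fun w => ∑ j, aBar γ aγ g w i j * pd g j w)
          (r ^ ((5:ℝ) + γ) * r) r (by positivity) hr.ne' v₀ i v]
        ring
      have hb : ∑ i, bBar γ bγ (fun u' => r ^ ((5:ℝ) + γ) * g (v₀ + r • u')) v i *
            pd (fun u' => r ^ ((5:ℝ) + γ) * g (v₀ + r • u')) i v
          = (r ^ ((5:ℝ) + γ) * r ^ 2) * ∑ i, bBar γ bγ g (v₀ + r • v) i * pd g i (v₀ + r • v) := by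
        rw [Finset.mul_sum]
        apply Finset.sum_congr rfl
        intro i _
        rw [bBar_scale γ bγ g r hr v₀ v i, pd_affine g (r ^ ((5:ℝ) + γ)) r hK0.ne' hr.ne' v₀ i v]
        ring
      rw [hdiv, hb, cBar_scale γ cγ g r hr v₀ v]
      ring
    beta_reduce
    rw [hLHS, hf.eqn _ _ _ hz, ← hRHS]
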